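/- Let (F, G) : [0, T) → ℝ² be a C¹ solution of the system Ġ = cF − dFG, Ḟ = −F² − m − kG (with constants c, d, k, m, d ≠ 0), and let r : [0,T) → ℝ satisfy ṙ = F r with r(0) > 0. Then the quantity (c − dG(t)) · r(t)^d is constant in t. In particular, the sign of c − dG(t) equals the sign of c − dG(0) for all t ∈ [0, T). -/

import Mathlib

/-- Along solutions of the characteristic system `Ġ = cF − dFG`, `Ḟ = −F² − m − kG`
with `ṙ = Fr`, `r(0) > 0`, the quantity `(c − dG(t)) r(t)^d` is constant; in particular
the sign of `c − dG(t)` is constant. -/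
theorem conserved_background (c d k m T : ℝ) (hd : d ≠ 0)
    (F G r : ℝ → ℝ)
    (hG : ∀ t ∈ Set.Ico (0:ℝ) T, HasDerivAt G (c * F t - d * F t * G t) t)
    (hF : ∀ t ∈ Set.Ico (0:ℝ) T, HasDerivAt F (-(F t) ^ 2 - m - k * G t) t)
    (hr : ∀ t ∈ Set.Ico (0:ℝ) T, HasDerivAt r (F t * r t) t)
    (hr0 : 0 < r 0) :
    ∀ t ∈ Set.Ico (0:ℝ) T,
      (c - d * G t) * r t ^ d = (c - d * G 0) * r 0 ^ d ∧
      Real.sign (c - d * G t) = Real.sign (c - d * G 0) := by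
  intro t ht
  obtain ⟨ht0, htT⟩ := ht
  have hT : (0:ℝ) < T := lt_of_le_of_lt ht0 htT
  have h0mem : (0:ℝ) ∈ Set.Ico (0:ℝ) T := ⟨le_refl _, hT⟩
  -- modified F, continuous on Iio T
  set F' : ℝ → ℝ := fun s => F (max s 0) with hF'def
  have hFc : ∀ s ∈ Set.Ico (0:ℝ) T, ContinuousAt F s := fun s hs => (hF s hs).continuousAt
  have hF'cont : ContinuousOn F' (Set.Iio T) := by
    apply ContinuousOn.comp (g := F) (f := fun s => max s 0)
      (s := Set.Iio T) (t := Set.Ico (0:ℝ) T)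
    · exact fun x hx => (hFc x hx).continuousWithinAt
    · exact (continuous_id.max continuous_const).continuousOn
    · intro s hs
      exact ⟨le_max_right _ _, max_lt hs hT⟩
  have hF'eq : ∀ s ∈ Set.Ico (0:ℝ) T, F' s = F s := by
    intro s hs; simp [hF'def, max_eq_left hs.1]
  -- integral of F'
  set I : ℝ → ℝ := fun u => ∫ s in (0:ℝ)..u, F' s with hIdef
  have hI : ∀ u ∈ Set.Ico (0:ℝ) T, HasDerivAt I (F u) u := by
    intro u hu
    have hsub : Set.uIcc (0:ℝ) u ⊆ Set.Iio T := by
      rw [Set.uIcc_of_le hu.1]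
      exact fun x hx => lt_of_le_of_lt hx.2 hu.2
    have hint : IntervalIntegrable F' MeasureTheory.volume 0 u :=
      (hF'cont.mono hsub).intervalIntegrable
    have hmeas : StronglyMeasurableAtFilter F' (nhds u) MeasureTheory.volume :=
      ContinuousOn.stronglyMeasurableAtFilter isOpen_Iio hF'cont u hu.2
    have hcont : ContinuousAt F' u :=
      (hF'cont.continuousAt (Iio_mem_nhds hu.2))
    have h := intervalIntegral.integral_hasDerivAt_right hint hmeas hcont
    rw [hF'eq u hu] at h
    exact h
  -- E = r * exp(-I) has zero derivative
  set E : ℝ → ℝ := fun u => r u * Real.exp (-(I u)) with hEdef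
  have hE : ∀ u ∈ Set.Ico (0:ℝ) T, HasDerivAt E 0 u := by
    intro u hu
    have h1 := (hr u hu).mul (((hI u hu).neg).exp)
    refine h1.congr_deriv ?_
    ring
  have hEconst : ∀ u ∈ Set.Ico (0:ℝ) T, E u = E 0 := by
    intro u hu
    have := Convex.norm_image_sub_le_of_norm_hasDerivWithin_le
      (f := E) (f' := fun _ => (0:ℝ)) (C := 0)
      (fun x hx => (hE x hx).hasDerivWithinAt) (fun x _ => by simp)
      (convex_Ico 0 T) h0mem hu
    simp only [zero_mul] at this
    have h2 : |E u - E 0| ≤ 0 := by simpa [Real.norm_eq_abs] using this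
    have h3 : E u - E 0 = 0 := abs_eq_zero.mp (le_antisymm h2 (abs_nonneg _))
    linarith
  have hrpos : ∀ u ∈ Set.Ico (0:ℝ) T, 0 < r u := by
    intro u hu
    have h1 : E u = E 0 := hEconst u hu
    have hI0 : I 0 = 0 := intervalIntegral.integral_same
    have h2 : r u * Real.exp (-(I u)) = r 0 := by
      simpa [hEdef, hI0] using h1
    have hexp : 0 < Real.exp (-(I u)) := Real.exp_pos _
    nlinarith
  -- H = (c - dG) * r^d has zero derivative
  set H : ℝ → ℝ := fun u => (c - d * G u) * r u ^ d with hHdef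
  have hH : ∀ u ∈ Set.Ico (0:ℝ) T, HasDerivAt H 0 u := by
    intro u hu
    have hru : 0 < r u := hrpos u hu
    have hG' : HasDerivAt (fun u => c - d * G u)
        (-(d * (c * F u - d * F u * G u))) u := by
      simpa using (HasDerivAt.const_sub c ((hG u hu).const_mul d))
    have hrp : HasDerivAt (fun u => r u ^ d)
        ((F u * r u) * d * r u ^ (d - 1)) u :=
      (hr u hu).rpow_const (Or.inl (ne_of_gt hru))
    have h1 := hG'.mul hrp
    have hkey : r u * r u ^ (d - 1) = r u ^ d := by
      rw [Real.rpow_sub hru, Real.rpow_one]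
      field_simp
    refine h1.congr_deriv ?_
    have : (c - d * G u) * (F u * r u * d * r u ^ (d - 1))
        = (c - d * G u) * (F u * d * (r u * r u ^ (d - 1))) := by ring
    rw [this, hkey]
    ring
  have hHconst : H t = H 0 := by
    have := Convex.norm_image_sub_le_of_norm_hasDerivWithin_le
      (f := H) (f' := fun _ => (0:ℝ)) (C := 0)
      (fun x hx => (hH x hx).hasDerivWithinAt) (fun x _ => by simp)
      (convex_Ico 0 T) h0mem ⟨ht0, htT⟩
    simp only [zero_mul] at this
    have h2 : |H t - H 0| ≤ 0 := by simpa [Real.norm_eq_abs] using this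
    have := abs_nonneg (H t - H 0)
    have h3 : |H t - H 0| = 0 := le_antisymm h2 this
    have := abs_eq_zero.mp h3
    linarith
  have hmain : (c - d * G t) * r t ^ d = (c - d * G 0) * r 0 ^ d := hHconst
  refine ⟨hmain, ?_⟩
  have hrt : 0 < r t := hrpos t ⟨ht0, htT⟩
  have hp1 : 0 < r t ^ d := Real.rpow_pos_of_pos hrt d
  have hp0 : 0 < r 0 ^ d := Real.rpow_pos_of_pos hr0 d
  rcases lt_trichotomy (c - d * G 0) 0 with h | h | h
  · have hneg : c - d * G t < 0 := by nlinarith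
    rw [Real.sign_of_neg hneg, Real.sign_of_neg h]
  · have hzero : c - d * G t = 0 := by
      have : (c - d * G t) * r t ^ d = 0 := by rw [hmain, h]; ring
      exact (mul_eq_zero.mp this).resolve_right (ne_of_gt hp1)
    rw [hzero, h]
  · have hpos : 0 < c - d * G t := by nlinarith
    rw [Real.sign_of_pos hpos, Real.sign_of_pos h]
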